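/- There exist constants b₃ > 0 and C > 0 such that, for all sufficiently large x, the number of positive integers n ≤ x with ω(ψ(n)) > b₃·(log log x)² is at most C·x/log x, where ω(m) denotes the number of distinct prime factors of m. -/
import Mathlib


open Filter Real

/-- Dedekind's arithmetic function `ψ(n) = n ∏_{p ∣ n} (1 + 1/p)`. -/
def dedekindPsi (n : ℕ) : ℕ :=
  n * (∏ p ∈ n.primeFactors, (p + 1)) / ∏ p ∈ n.primeFactors, p

lemma harmonic_bound (M : ℕ) : ∑ d ∈ Finset.Icc 1 M, (d:ℝ)⁻¹ ≤ 1 + Real.log M := by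
  have h := harmonic_le_one_add_log M
  rw [harmonic_eq_sum_Icc] at h
  push_cast at h
  exact h

lemma two_pow_omega_le (m : ℕ) (hm : m ≠ 0) :
    (2:ℕ) ^ m.primeFactors.card ≤ m.divisors.card := by
  rw [Nat.card_divisors hm, ← Finset.prod_const]
  refine Finset.prod_le_prod' fun p hp => ?_
  have : m.factorization p ≠ 0 := by
    rwa [← Finsupp.mem_support_iff, Nat.support_factorization]
  omega

lemma divInnerSum (M d : ℕ) (hd : 1 ≤ d) :
    ∑ m ∈ (Finset.Icc 1 M).filter (d ∣ ·), (m:ℝ)⁻¹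
      ≤ (d:ℝ)⁻¹ * ∑ k ∈ Finset.Icc 1 M, (k:ℝ)⁻¹ := by
  have hd0 : 0 < d := hd
  have himg : (Finset.Icc 1 M).filter (d ∣ ·)
      = (Finset.Icc 1 (M / d)).image (fun k => d * k) := by
    ext m
    simp only [Finset.mem_filter, Finset.mem_Icc, Finset.mem_image]
    constructor
    · rintro ⟨⟨h1, h2⟩, hdm⟩
      refine ⟨m / d, ⟨?_, ?_⟩, Nat.mul_div_cancel' hdm⟩
      · have : m ≠ 0 := by omega
        have := Nat.div_pos (Nat.le_of_dvd (by omega) hdm) hd0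
        omega
      · exact Nat.div_le_div_right h2
    · rintro ⟨k, ⟨hk1, hk2⟩, rfl⟩
      refine ⟨⟨Nat.mul_pos hd0 hk1, ?_⟩, Dvd.intro k rfl⟩
      calc d * k ≤ d * (M / d) := Nat.mul_le_mul_left d hk2
        _ ≤ M := Nat.mul_div_le M d
  rw [himg, Finset.sum_image (fun a _ b _ h => Nat.eq_of_mul_eq_mul_left hd0 h)]
  have : ∀ k ∈ Finset.Icc 1 (M / d), ((d * k : ℕ) : ℝ)⁻¹ = (d:ℝ)⁻¹ * (k:ℝ)⁻¹ := by
    intro k _; push_cast; rw [mul_inv]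
  rw [Finset.sum_congr rfl this, ← Finset.mul_sum]
  refine mul_le_mul_of_nonneg_left ?_ (by positivity)
  refine Finset.sum_le_sum_of_subset_of_nonneg
    (Finset.Icc_subset_Icc_right (Nat.div_le_self M d)) ?_
  intro i _ _; positivity

lemma core_sum (M : ℕ) :
    ∑ m ∈ Finset.Icc 1 M, (2:ℝ) ^ m.primeFactors.card * (m:ℝ)⁻¹
      ≤ (1 + Real.log M) ^ 2 := by
  set H : ℝ := ∑ d ∈ Finset.Icc 1 M, (d:ℝ)⁻¹ with hH
  have hH0 : 0 ≤ H := Finset.sum_nonneg fun i _ => by positivity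
  have hHle : H ≤ 1 + Real.log M := harmonic_bound M
  calc ∑ m ∈ Finset.Icc 1 M, (2:ℝ) ^ m.primeFactors.card * (m:ℝ)⁻¹
      ≤ ∑ m ∈ Finset.Icc 1 M, (m.divisors.card : ℝ) * (m:ℝ)⁻¹ := by
        refine Finset.sum_le_sum fun m hm => ?_
        have hm1 : 1 ≤ m := (Finset.mem_Icc.mp hm).1
        refine mul_le_mul_of_nonneg_right ?_ (by positivity)
        have := two_pow_omega_le m (by omega)
        exact_mod_cast this
    _ = ∑ m ∈ Finset.Icc 1 M,
          ∑ d ∈ (Finset.Icc 1 M).filter (· ∣ m), (m:ℝ)⁻¹ := by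
        refine Finset.sum_congr rfl fun m hm => ?_
        obtain ⟨hm1, hm2⟩ := Finset.mem_Icc.mp hm
        have hset : m.divisors = (Finset.Icc 1 M).filter (· ∣ m) := by
          ext d
          simp only [Nat.mem_divisors, Finset.mem_filter, Finset.mem_Icc]
          constructor
          · rintro ⟨hdm, hm0⟩
            exact ⟨⟨Nat.pos_of_dvd_of_pos hdm (by omega),
              le_trans (Nat.le_of_dvd (by omega) hdm) hm2⟩, hdm⟩
          · rintro ⟨_, hdm⟩; exact ⟨hdm, by omega⟩
        rw [hset, Finset.sum_const, nsmul_eq_mul]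
    _ = ∑ d ∈ Finset.Icc 1 M,
          ∑ m ∈ (Finset.Icc 1 M).filter (d ∣ ·), (m:ℝ)⁻¹ := by
        simp only [Finset.sum_filter]
        exact Finset.sum_comm
    _ ≤ ∑ d ∈ Finset.Icc 1 M, (d:ℝ)⁻¹ * H := by
        refine Finset.sum_le_sum fun d hd => ?_
        exact divInnerSum M d (Finset.mem_Icc.mp hd).1
    _ = H * H := by rw [← Finset.sum_mul]
    _ ≤ (1 + Real.log M) ^ 2 := by nlinarith

lemma psi_dvd (n : ℕ) :
    dedekindPsi n ∣ n * ∏ p ∈ n.primeFactors, (p + 1) := by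
  exact Nat.div_dvd_of_dvd
    (dvd_mul_of_dvd_left (Nat.prod_primeFactors_dvd n) _)

lemma omega_psi_le (n : ℕ) :
    (dedekindPsi n).primeFactors.card
      ≤ n.primeFactors.card + ∑ p ∈ n.primeFactors, (p + 1).primeFactors.card := by
  have hsub : (dedekindPsi n).primeFactors ⊆
      n.primeFactors ∪ n.primeFactors.biUnion (fun p => (p + 1).primeFactors) := by
    intro q hq
    obtain ⟨hqp, hqd, hne⟩ := Nat.mem_primeFactors.mp hq
    have hn0 : n ≠ 0 := by
      rintro rfl
      simp [dedekindPsi] at hne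
    have hdvd : q ∣ n * ∏ p ∈ n.primeFactors, (p + 1) := hqd.trans (psi_dvd n)
    rcases (Nat.Prime.dvd_mul hqp).mp hdvd with h | h
    · exact Finset.mem_union_left _ (Nat.mem_primeFactors.mpr ⟨hqp, h, hn0⟩)
    · obtain ⟨p, hp, hq1⟩ := hqp.prime.exists_mem_finset_dvd h
      exact Finset.mem_union_right _ (Finset.mem_biUnion.mpr
        ⟨p, hp, Nat.mem_primeFactors.mpr ⟨hqp, hq1, p.succ_ne_zero⟩⟩)
  calc (dedekindPsi n).primeFactors.card
      ≤ (n.primeFactors ∪ n.primeFactors.biUnion (fun p => (p + 1).primeFactors)).card :=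
        Finset.card_le_card hsub
    _ ≤ n.primeFactors.card
          + (n.primeFactors.biUnion (fun p => (p + 1).primeFactors)).card :=
        Finset.card_union_le _ _
    _ ≤ _ := Nat.add_le_add_left (Finset.card_biUnion_le) _

set_option maxHeartbeats 1000000 in
theorem omega_psi_bound :
    ∃ b₃ > (0 : ℝ), ∃ C > (0 : ℝ), ∀ᶠ x : ℝ in Filter.atTop,
      (((Finset.Icc 1 ⌊x⌋₊).filter (fun n : ℕ =>
          b₃ * (Real.log (Real.log x)) ^ 2 < ((dedekindPsi n).primeFactors.card : ℝ))).card : ℝ)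
        ≤ C * x / Real.log x := by
  refine ⟨30, by norm_num, 12, by norm_num, ?_⟩
  have hev1 : ∀ᶠ x : ℝ in atTop, (16:ℝ) ≤ x := eventually_ge_atTop 16
  have hev2 : ∀ᶠ x : ℝ in atTop, (2:ℝ) ≤ Real.log x :=
    Real.tendsto_log_atTop.eventually_ge_atTop 2
  have hev3 : ∀ᶠ x : ℝ in atTop, (1:ℝ) ≤ Real.log (Real.log x) :=
    (Real.tendsto_log_atTop.comp Real.tendsto_log_atTop).eventually_ge_atTop 1
  filter_upwards [hev1, hev2, hev3] with x hx16 hy2 hL1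
  set N := ⌊x⌋₊ with hNdef
  set y := Real.log x with hydef
  set L := Real.log y with hLdef
  have hx0 : (0:ℝ) < x := by linarith
  have hy0 : (0:ℝ) < y := by linarith
  have hL0 : (0:ℝ) < L := by linarith
  have hN1 : 1 ≤ N := Nat.le_floor (by exact_mod_cast (by linarith : (1:ℝ) ≤ x))
  have hNx : (N:ℝ) ≤ x := Nat.floor_le hx0.le
  have hN0 : (0:ℝ) < (N:ℝ) := by exact_mod_cast hN1
  have hlogN : Real.log N ≤ y := Real.log_le_log hN0 hNx
  have hlogN0 : 0 ≤ Real.log (N:ℝ) := Real.log_nonneg (by exact_mod_cast hN1)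
  have hlogN1 : Real.log ((N:ℝ)+1) ≤ 1 + y := by
    have h2x : (N:ℝ)+1 ≤ 2*x := by linarith
    calc Real.log ((N:ℝ)+1) ≤ Real.log (2*x) := Real.log_le_log (by linarith) h2x
      _ = Real.log 2 + Real.log x := Real.log_mul (by norm_num) (ne_of_gt hx0)
      _ ≤ 1 + y := by
          have := Real.log_two_lt_d9; rw [← hydef]; linarith
  set A := (2:ℝ) ^ (5*L) with hAdef
  have hA0 : (0:ℝ) < A := Real.rpow_pos_of_pos (by norm_num) _
  have hA3 : y^(3:ℕ) ≤ A := by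
    have h1 : y^(3:ℕ) = Real.exp (L * 3) := by
      rw [← Real.rpow_natCast y 3, Real.rpow_def_of_pos hy0, ← hLdef]
      norm_num
    have h2 : A = Real.exp (Real.log 2 * (5*L)) := Real.rpow_def_of_pos (by norm_num) _
    rw [h1, h2]
    apply Real.exp_le_exp.mpr
    have hlog2 : (0.6931471803:ℝ) < Real.log 2 := Real.log_two_gt_d9
    nlinarith [hL0.le]
  clear_value N y L A
  set B₀ := (Finset.Icc 1 N).filter (fun n : ℕ => 5*L < (n.primeFactors.card : ℝ)) with hB₀def
  set P := (Finset.Icc 1 N).filter (fun p : ℕ => 5*L < ((p+1).primeFactors.card : ℝ)) with hPdef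
  set B₂ := P.biUnion (fun p => (Finset.Icc 1 N).filter (p ∣ ·)) with hB₂def
  have hsubB : (Finset.Icc 1 N).filter (fun n : ℕ =>
      30 * L ^ 2 < ((dedekindPsi n).primeFactors.card : ℝ)) ⊆ B₀ ∪ B₂ := by
    intro n hn
    obtain ⟨hnIcc, hn30⟩ := Finset.mem_filter.mp hn
    obtain ⟨hn1, hnN⟩ := Finset.mem_Icc.mp hnIcc
    by_contra hc
    rw [Finset.mem_union] at hc
    push_neg at hc
    obtain ⟨hc0, hc2⟩ := hc
    have hω : (n.primeFactors.card : ℝ) ≤ 5*L := by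
      by_contra h; push_neg at h
      exact hc0 (Finset.mem_filter.mpr ⟨hnIcc, h⟩)
    have hp : ∀ p ∈ n.primeFactors, ((p+1).primeFactors.card : ℝ) ≤ 5*L := by
      intro p hpmem
      by_contra h; push_neg at h
      apply hc2
      have hpd := Nat.dvd_of_mem_primeFactors hpmem
      have hpP : p ∈ P := by
        refine Finset.mem_filter.mpr ⟨Finset.mem_Icc.mpr
          ⟨(Nat.prime_of_mem_primeFactors hpmem).pos,
            le_trans (Nat.le_of_dvd (by omega) hpd) hnN⟩, h⟩
      exact Finset.mem_biUnion.mpr ⟨p, hpP, Finset.mem_filter.mpr ⟨hnIcc, hpd⟩⟩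
    have hkey : ((dedekindPsi n).primeFactors.card : ℝ) ≤ 5*L + 5*L*(5*L) := by
      have h1 := omega_psi_le n
      have h2 : ((dedekindPsi n).primeFactors.card:ℝ) ≤ (n.primeFactors.card:ℝ)
          + ∑ p ∈ n.primeFactors, ((p+1).primeFactors.card:ℝ) := by
        exact_mod_cast h1
      have h3 : ∑ p ∈ n.primeFactors, ((p+1).primeFactors.card:ℝ)
          ≤ ∑ _p ∈ n.primeFactors, 5*L := Finset.sum_le_sum hp
      rw [Finset.sum_const, nsmul_eq_mul] at h3
      have h4 : (0:ℝ) ≤ (n.primeFactors.card : ℝ) := Nat.cast_nonneg _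
      nlinarith
    nlinarith
  have hB0card : (B₀.card : ℝ) ≤ (N:ℝ) * A⁻¹ * (1+Real.log N)^2 := by
    have h1 : (B₀.card : ℝ) = ∑ _n ∈ B₀, (1:ℝ) := by simp
    rw [h1]
    calc ∑ _n ∈ B₀, (1:ℝ)
        ≤ ∑ n ∈ B₀, (N:ℝ) * A⁻¹ * ((2:ℝ)^n.primeFactors.card * (n:ℝ)⁻¹) := by
          refine Finset.sum_le_sum fun n hn => ?_
          obtain ⟨hnI, hn5⟩ := Finset.mem_filter.mp hn
          obtain ⟨hn1, hnN⟩ := Finset.mem_Icc.mp hnI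
          have hn0 : (0:ℝ) < (n:ℝ) := by exact_mod_cast hn1
          have hAle : A ≤ (2:ℝ)^n.primeFactors.card := by
            rw [hAdef, ← Real.rpow_natCast 2 n.primeFactors.card]
            exact Real.rpow_le_rpow_of_exponent_le one_le_two hn5.le
          have h2 : (1:ℝ) ≤ (N:ℝ)*(n:ℝ)⁻¹ := by
            rw [← div_eq_mul_inv, le_div_iff₀ hn0, one_mul]
            exact_mod_cast hnN
          have h3 : (1:ℝ) ≤ A⁻¹ * (2:ℝ)^n.primeFactors.card := by
            rw [inv_mul_eq_div, le_div_iff₀ hA0, one_mul]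
            exact hAle
          calc (1:ℝ) = 1*1 := by ring
            _ ≤ ((N:ℝ)*(n:ℝ)⁻¹) * (A⁻¹*(2:ℝ)^n.primeFactors.card) :=
                mul_le_mul h2 h3 one_pos.le (by positivity)
            _ = (N:ℝ)*A⁻¹*((2:ℝ)^n.primeFactors.card*(n:ℝ)⁻¹) := by ring
      _ = (N:ℝ)*A⁻¹ * ∑ n ∈ B₀, (2:ℝ)^n.primeFactors.card * (n:ℝ)⁻¹ := by
          rw [← Finset.mul_sum]
      _ ≤ (N:ℝ)*A⁻¹ * ∑ n ∈ Finset.Icc 1 N, (2:ℝ)^n.primeFactors.card*(n:ℝ)⁻¹ := by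
          refine mul_le_mul_of_nonneg_left ?_ (by positivity)
          refine Finset.sum_le_sum_of_subset_of_nonneg (Finset.filter_subset _ _) ?_
          intro i _ _; positivity
      _ ≤ (N:ℝ)*A⁻¹*(1+Real.log N)^2 :=
          mul_le_mul_of_nonneg_left (core_sum N) (by positivity)
  have hB2card : (B₂.card : ℝ) ≤ 2*(N:ℝ)*A⁻¹*(1+Real.log ((N:ℝ)+1))^2 := by
    have h1 : B₂.card ≤ ∑ p ∈ P, ((Finset.Icc 1 N).filter (p ∣ ·)).card :=
      Finset.card_biUnion_le
    have h2 : ∀ p ∈ P, ((Finset.Icc 1 N).filter (p ∣ ·)).card = N / p := by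
      intro p _
      rw [show Finset.Icc 1 N = Finset.Ioc 0 N from Finset.Icc_add_one_left_eq_Ioc 0 N]
      exact Nat.Ioc_filter_dvd_card_eq_div N p
    have h1' : (B₂.card:ℝ) ≤ ∑ p ∈ P, ((N/p:ℕ):ℝ) := by
      rw [Finset.sum_congr rfl h2] at h1
      exact_mod_cast h1
    calc (B₂.card:ℝ) ≤ ∑ p ∈ P, ((N/p:ℕ):ℝ) := h1'
      _ ≤ ∑ p ∈ P, 2*(N:ℝ)*A⁻¹*((2:ℝ)^((p+1).primeFactors.card) * (((p:ℝ))+1)⁻¹) := by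
          refine Finset.sum_le_sum fun p hp => ?_
          obtain ⟨hpI, hp5⟩ := Finset.mem_filter.mp hp
          obtain ⟨hp1, hpN⟩ := Finset.mem_Icc.mp hpI
          have hp0 : (0:ℝ) < (p:ℝ) := by exact_mod_cast hp1
          have hp1' : (1:ℝ) ≤ (p:ℝ) := by exact_mod_cast hp1
          have hAle : A ≤ (2:ℝ)^((p+1).primeFactors.card) := by
            rw [hAdef, ← Real.rpow_natCast 2 ((p+1).primeFactors.card)]
            exact Real.rpow_le_rpow_of_exponent_le one_le_two hp5.le
          have h3 : (1:ℝ) ≤ A⁻¹ * (2:ℝ)^((p+1).primeFactors.card) := by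
            rw [inv_mul_eq_div, le_div_iff₀ hA0, one_mul]
            exact hAle
          calc ((N/p:ℕ):ℝ) ≤ (N:ℝ)/(p:ℝ) := Nat.cast_div_le
            _ ≤ 2*(N:ℝ)/((p:ℝ)+1) := by
                rw [div_le_div_iff₀ hp0 (by linarith)]
                nlinarith
            _ ≤ 2*(N:ℝ)/((p:ℝ)+1) * (A⁻¹ * (2:ℝ)^((p+1).primeFactors.card)) :=
                le_mul_of_one_le_right (by positivity) h3
            _ = 2*(N:ℝ)*A⁻¹*((2:ℝ)^((p+1).primeFactors.card) * (((p:ℝ))+1)⁻¹) := by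
                ring
      _ = 2*(N:ℝ)*A⁻¹ * ∑ p ∈ P,
            ((2:ℝ)^((p+1).primeFactors.card) * (((p:ℝ))+1)⁻¹) := by
          rw [← Finset.mul_sum]
      _ ≤ 2*(N:ℝ)*A⁻¹ * (1+Real.log ((N:ℝ)+1))^2 := by
          refine mul_le_mul_of_nonneg_left ?_ (by positivity)
          have himg : ∑ p ∈ P, ((2:ℝ)^((p+1).primeFactors.card) * (((p:ℝ))+1)⁻¹)
              = ∑ m ∈ P.image (fun p : ℕ => p + 1), (2:ℝ)^(m.primeFactors.card) * (m:ℝ)⁻¹ := by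
            rw [Finset.sum_image (fun a _ b _ h => by omega)]
            refine Finset.sum_congr rfl fun p _ => ?_
            norm_num
          rw [himg]
          have hsub2 : P.image (fun p : ℕ => p + 1) ⊆ Finset.Icc 1 (N+1) := by
            intro m hm
            obtain ⟨p, hp, rfl⟩ := Finset.mem_image.mp hm
            obtain ⟨hp1, hpN⟩ := Finset.mem_Icc.mp (Finset.mem_filter.mp hp).1
            exact Finset.mem_Icc.mpr ⟨by omega, by omega⟩
          calc ∑ m ∈ P.image (fun p : ℕ => p + 1), (2:ℝ)^(m.primeFactors.card) * (m:ℝ)⁻¹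
              ≤ ∑ m ∈ Finset.Icc 1 (N+1), (2:ℝ)^(m.primeFactors.card)*(m:ℝ)⁻¹ :=
                Finset.sum_le_sum_of_subset_of_nonneg hsub2 (fun i _ _ => by positivity)
            _ ≤ (1 + Real.log ((N:ℕ)+1 : ℕ))^2 := core_sum (N+1)
            _ = (1+Real.log ((N:ℝ)+1))^2 := by push_cast; rfl
  calc (((Finset.Icc 1 N).filter (fun n : ℕ =>
          30 * L ^ 2 < ((dedekindPsi n).primeFactors.card : ℝ))).card : ℝ)
      ≤ ((B₀ ∪ B₂).card : ℝ) := Nat.cast_le.mpr (Finset.card_le_card hsubB)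
    _ ≤ (B₀.card:ℝ) + (B₂.card:ℝ) := by exact_mod_cast Finset.card_union_le B₀ B₂
    _ ≤ (N:ℝ)*A⁻¹*(1+Real.log N)^2 + 2*(N:ℝ)*A⁻¹*(1+Real.log ((N:ℝ)+1))^2 :=
        add_le_add hB0card hB2card
    _ ≤ 3*(N:ℝ)*A⁻¹*(2+y)^2 := by
        have e1 : (1+Real.log (N:ℝ))^2 ≤ (2+y)^2 :=
          pow_le_pow_left₀ (by linarith) (by linarith) 2
        have e2 : (1+Real.log ((N:ℝ)+1))^2 ≤ (2+y)^2 := by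
          have h0 : 0 ≤ 1 + Real.log ((N:ℝ)+1) := by
            have := Real.log_nonneg (by linarith : (1:ℝ) ≤ (N:ℝ)+1); linarith
          exact pow_le_pow_left₀ h0 (by linarith) 2
        have hNA : (0:ℝ) ≤ (N:ℝ)*A⁻¹ := by positivity
        nlinarith
    _ ≤ 3*(N:ℝ)*(y^3)⁻¹*(2+y)^2 := by
        refine mul_le_mul_of_nonneg_right
          (mul_le_mul_of_nonneg_left (inv_anti₀ (by positivity) hA3)
            (by positivity)) (by positivity)
    _ ≤ 3*x*(y^3)⁻¹*(2*y)^2 := by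
        have e3 : (2+y)^2 ≤ (2*y)^2 := pow_le_pow_left₀ (by linarith) (by linarith) 2
        have h5 : (0:ℝ) ≤ 3*x*(y^3)⁻¹ := by positivity
        have h6 : 3*(N:ℝ)*(y^3)⁻¹ ≤ 3*x*(y^3)⁻¹ := by
          refine mul_le_mul_of_nonneg_right ?_ (by positivity)
          linarith
        nlinarith [sq_nonneg (2+y)]
    _ = 12*x/y := by
        field_simp
        ring
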